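/- Let X be a real normed linear space, let u, v, x ∈ S_X, ρ ∈ ℝ with ρ ≠ 0, and μ ∈ ℝ be such that x ⊥_B (v − u) and ρx = μu + (1−μ)v. Then |ρ| ≤ ‖γu + (1−γ)v‖ for every γ ∈ ℝ; in particular |ρ| ≤ inf_{0<γ<1/2} ‖γu + (1−γ)v‖. -/
import Mathlib

/-- If `u, v, x ∈ S_X`, `ρ ≠ 0`, `x ⊥_B (v − u)` and `ρx = μu + (1−μ)v`, then
`|ρ| ≤ ‖γu + (1−γ)v‖` for every real `γ`; in particular
`|ρ| ≤ inf_{0<γ<1/2} ‖γu + (1−γ)v‖`. -/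
theorem abs_le_segment_norm_of_birkhoff {X : Type*} [NormedAddCommGroup X]
    [NormedSpace ℝ X] (u v x : X) (ρ μ : ℝ)
    (hu : ‖u‖ = 1) (hv : ‖v‖ = 1) (hx : ‖x‖ = 1) (hρ : ρ ≠ 0)
    (horth : ∀ l : ℝ, ‖x‖ ≤ ‖x + l • (v - u)‖)
    (heq : ρ • x = μ • u + (1 - μ) • v) :
    (∀ γ : ℝ, |ρ| ≤ ‖γ • u + (1 - γ) • v‖) ∧
    |ρ| ≤ sInf {r : ℝ | ∃ γ : ℝ, 0 < γ ∧ γ < 1/2 ∧ r = ‖γ • u + (1 - γ) • v‖} := by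
  have key : ∀ γ : ℝ, |ρ| ≤ ‖γ • u + (1 - γ) • v‖ := by
    intro γ
    have hrep : γ • u + (1 - γ) • v = ρ • (x + ((μ - γ)/ρ) • (v - u)) := by
      rw [smul_add, smul_smul, mul_div_cancel₀ _ hρ, heq]
      module
    rw [hrep, norm_smul, Real.norm_eq_abs]
    calc |ρ| = |ρ| * ‖x‖ := by rw [hx, mul_one]
      _ ≤ |ρ| * ‖x + ((μ - γ)/ρ) • (v - u)‖ :=
        mul_le_mul_of_nonneg_left (horth _) (abs_nonneg ρ)
  refine ⟨key, le_csInf ⟨‖(1/4 : ℝ) • u + (1 - 1/4 : ℝ) • v‖, 1/4, by norm_num⟩ ?_⟩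
  rintro r ⟨γ, _, _, rfl⟩
  exact key γ
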